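/- arXiv:0901.4640 — 2 statements merged into one kernel-verified Lean document; each statement's English description precedes it below -/
import Mathlib

section
/- Let (Σ,σ) be a primitive Markov subshift on a countable alphabet and let A : Σ → ℝ be a bounded above, locally Hölder continuous potential with inf A|_{⋃_{i∈F}[i]} > −∞. Define u_A(x) = sup{S_k(A − β_A)(y) : k ≥ 0, y ∈ Σ, σ^k(y) = x}. Then u_A is a well-defined real-valued function satisfying 0 ≤ u_A(x) ≤ max{Var(A) + K₀(sup A − inf A|_{⋃_{i∈F}[i]}), K₀(sup A − β_A)} for all x ∈ Σ, and A + u_A − u_A∘σ ≤ β_A on Σ. -/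
open MeasureTheory Filter Topology Set
open scoped ENNReal

/-- Membership in the Markov shift: admissible transitions at every coordinate. -/
def InShift (M : ℕ → ℕ → Bool) (x : ℕ → ℕ) : Prop := ∀ j, M (x j) (x (j+1)) = true

/-- The one-sided countable Markov shift `Σ` associated to the transition matrix `M`,
as a subtype of `ℕ → ℕ` (with the product topology, which is the topology induced by
the metric `d(x,y) = λ^{min{j : x_j ≠ y_j}}`). -/
abbrev ShiftSpace (M : ℕ → ℕ → Bool) := {x : ℕ → ℕ // InShift M x}

/-- The left shift map `σ`. -/
def shiftMap (M : ℕ → ℕ → Bool) (x : ShiftSpace M) : ShiftSpace M :=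
  ⟨fun j => x.1 (j+1), fun j => x.2 (j+1)⟩

/-- `Agree M k x y` means the points `x, y` coincide on the first `k` coordinates;
for `k ≥ 1` this is exactly `d(x,y) ≤ λ^k` for the metric of the paper. -/
def Agree (M : ℕ → ℕ → Bool) (k : ℕ) (x y : ShiftSpace M) : Prop :=
  ∀ j < k, x.1 j = y.1 j

/-- The sets `B_n` of symbols admitting admissible words of length `n+1` starting at them. -/
def BSet (M : ℕ → ℕ → Bool) : ℕ → Set ℕ
  | 0 => {i | ∃ j, M i j = true}
  | n+1 => {i | ∃ j ∈ BSet M n, M i j = true}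

/-- `⋂_{n ≥ 0} B_n`. -/
def BInf (M : ℕ → ℕ → Bool) : Set ℕ := ⋂ n, BSet M n

/-- `M` is primitive with connecting set `F` and connection length `K₀`: any two symbols
of `⋂ B_n` can be joined by an admissible word of length `K₀` with all letters in `F`. -/
def Primitive (M : ℕ → ℕ → Bool) (F : Set ℕ) (K₀ : ℕ) : Prop :=
  ∀ i ∈ BInf M, ∀ j ∈ BInf M, ∃ p : ℕ → ℕ,
    p 0 = i ∧ p (K₀ + 1) = j ∧ (∀ t, 1 ≤ t → t ≤ K₀ → p t ∈ F) ∧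
    (∀ t ≤ K₀, M (p t) (p (t+1)) = true)

/-- `A` is locally Hölder continuous with constant `H`:
`Var_k(A) ≤ H ⬝ λ^k` for every `k ≥ 1`. -/
def LocHolder (M : ℕ → ℕ → Bool) (lam H : ℝ) (A : ShiftSpace M → ℝ) : Prop :=
  ∀ k : ℕ, 1 ≤ k → ∀ x y : ShiftSpace M, Agree M k x y → A x - A y ≤ H * lam ^ k

/-- `A` is coercive: `sup A|_{[i]} → -∞` as `i → ∞`. -/
def Coercive (M : ℕ → ℕ → Bool) (A : ShiftSpace M → ℝ) : Prop :=
  ∀ C : ℝ, ∃ N : ℕ, ∀ i : ℕ, N ≤ i → ∀ x : ShiftSpace M, x.1 0 = i → A x ≤ C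

/-- The union of cylinders `⋃_{i ∈ F} [i]`. -/
def FCyl (M : ℕ → ℕ → Bool) (F : Set ℕ) : Set (ShiftSpace M) := {x | x.1 0 ∈ F}

/-- `μ` is a `σ`-invariant Borel probability measure. -/
def InvProb (M : ℕ → ℕ → Bool) (μ : Measure (ShiftSpace M)) : Prop :=
  IsProbabilityMeasure μ ∧ μ.map (shiftMap M) = μ

/-- The ergodic maximizing value `β_A = sup {∫ A dμ : μ ∈ M_σ}`. -/
noncomputable def betaA (M : ℕ → ℕ → Bool) (A : ShiftSpace M → ℝ) : ℝ :=
  sSup {r | ∃ μ : Measure (ShiftSpace M), InvProb M μ ∧ Integrable A μ ∧ ∫ x, A x ∂μ = r}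

/-- The compact subshift `Σ_I` on the finite alphabet `{0, …, I}`. -/
def SpaceI (M : ℕ → ℕ → Bool) (I : ℕ) : Set (ShiftSpace M) := {x | ∀ j, x.1 j ≤ I}

/-- `β_A(I) = max {∫ A dμ : μ ∈ M_σ, supp μ ⊆ Σ_I}`. -/
noncomputable def betaAI (M : ℕ → ℕ → Bool) (A : ShiftSpace M → ℝ) (I : ℕ) : ℝ :=
  sSup {r | ∃ μ : Measure (ShiftSpace M), InvProb M μ ∧ μ (SpaceI M I) = 1 ∧
    Integrable A μ ∧ ∫ x, A x ∂μ = r}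

/-- Birkhoff sum `S_k A`. -/
noncomputable def birkhoff (M : ℕ → ℕ → Bool) (A : ShiftSpace M → ℝ) (k : ℕ)
    (x : ShiftSpace M) : ℝ :=
  ∑ j ∈ Finset.range k, A ((shiftMap M)^[j] x)

/-- The `k`-th variation `Var_k(A)`. -/
noncomputable def VarK (M : ℕ → ℕ → Bool) (A : ShiftSpace M → ℝ) (k : ℕ) : ℝ :=
  sSup {r | ∃ x y : ShiftSpace M, Agree M k x y ∧ A x - A y = r}

/-- `Var(A) = ∑_{k ≥ 1} Var_k(A)`. -/
noncomputable def VarSum (M : ℕ → ℕ → Bool) (A : ShiftSpace M → ℝ) : ℝ :=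
  ∑' k : ℕ, VarK M A (k + 1)

/-- `sup A`. -/
noncomputable def supA (M : ℕ → ℕ → Bool) (A : ShiftSpace M → ℝ) : ℝ :=
  sSup (Set.range A)

/-- `inf A|_{⋃_{i ∈ F} [i]}`. -/
noncomputable def infF (M : ℕ → ℕ → Bool) (F : Set ℕ) (A : ShiftSpace M → ℝ) : ℝ :=
  sInf (A '' FCyl M F)

/-- The defining set for `u_A(x)`: all values `S_k(A - β_A)(y)` with `σ^k(y) = x`. -/
noncomputable def uASet (M : ℕ → ℕ → Bool) (A : ShiftSpace M → ℝ) (x : ShiftSpace M) :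
    Set ℝ :=
  {r | ∃ (k : ℕ) (y : ShiftSpace M), (shiftMap M)^[k] y = x ∧
    birkhoff M A k y - k * betaA M A = r}

/-- The candidate minimal sub-action
`u_A(x) = sup {S_k(A - β_A)(y) : k ≥ 0, σ^k(y) = x}`. -/
noncomputable def uA (M : ℕ → ℕ → Bool) (A : ShiftSpace M → ℝ) (x : ShiftSpace M) : ℝ :=
  sSup (uASet M A x)

/-- The non-wandering set `Ω(A, I)` with respect to `A|_{Σ_I}`. -/
def NonWandering (M : ℕ → ℕ → Bool) (A : ShiftSpace M → ℝ) (I : ℕ) :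
    Set (ShiftSpace M) :=
  {x | x ∈ SpaceI M I ∧ ∀ ε : ℝ, 0 < ε → ∀ m : ℕ,
    ∃ y ∈ SpaceI M I, ∃ n : ℕ, 1 ≤ n ∧ Agree M m x y ∧
      Agree M m x ((shiftMap M)^[n] y) ∧
      |birkhoff M A n y - n * betaAI M A I| < ε}

lemma shift_meas (M : ℕ → ℕ → Bool) : Measurable (shiftMap M) := by
  apply Measurable.subtype_mk
  exact measurable_pi_lambda _ (fun j => (measurable_pi_apply (j+1)).comp measurable_subtype_coe)

lemma iter_apply (M : ℕ → ℕ → Bool) (x : ShiftSpace M) (i j : ℕ) :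
    ((shiftMap M)^[i] x).1 j = x.1 (j + i) := by
  induction i generalizing x with
  | zero => rfl
  | succ i ih =>
    rw [Function.iterate_succ_apply, ih]
    show x.1 (j + i + 1) = _
    congr 1

lemma symbol_mem_BInf (M : ℕ → ℕ → Bool) (x : ShiftSpace M) (j : ℕ) : x.1 j ∈ BInf M := by
  apply Set.mem_iInter.2
  intro n
  induction n generalizing j with
  | zero => exact ⟨x.1 (j+1), x.2 j⟩
  | succ n ih => exact ⟨x.1 (j+1), ih (j+1), x.2 j⟩

lemma mod_succ_eq (n j : ℕ) (hn : 1 ≤ n) :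
    (j+1) % n = if j % n + 1 = n then 0 else j % n + 1 := by
  have h1 : (j+1) % n = (j % n + 1 % n) % n := Nat.add_mod j 1 n
  rcases Nat.lt_or_ge n 2 with h2 | h2
  · interval_cases n
    simp [Nat.mod_one]
  · have h3 : 1 % n = 1 := Nat.mod_eq_of_lt (by omega)
    rw [h3] at h1
    by_cases h : j % n + 1 = n
    · simp [h, h1, Nat.mod_self]
    · have : j % n < n := Nat.mod_lt _ (by omega)
      rw [h1, if_neg h, Nat.mod_eq_of_lt (by omega)]

def perPoint (M : ℕ → ℕ → Bool) (n : ℕ) (w : ℕ → ℕ)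
    (hw : ∀ j, M (w (j % n)) (w ((j+1) % n)) = true) : ShiftSpace M :=
  ⟨fun j => w (j % n), hw⟩

lemma perPoint_periodic (M : ℕ → ℕ → Bool) (n : ℕ) (w : ℕ → ℕ) (hw : ∀ j, M (w (j % n)) (w ((j+1) % n)) = true) :
    (shiftMap M)^[n] (perPoint M n w hw) = perPoint M n w hw := by
  apply Subtype.ext
  funext j
  rw [iter_apply]
  show w ((j + n) % n) = w (j % n)
  rw [Nat.add_mod_right]

lemma betaSet_le_supA (M : ℕ → ℕ → Bool) (A : ShiftSpace M → ℝ)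
    (hbdd : BddAbove (Set.range A)) (r : ℝ)
    (hr : r ∈ {r | ∃ μ : Measure (ShiftSpace M), InvProb M μ ∧ Integrable A μ ∧ ∫ x, A x ∂μ = r}) :
    r ≤ supA M A := by
  obtain ⟨μ, ⟨hp, _⟩, hint, hr⟩ := hr
  subst hr
  have h1 : ∫ x, A x ∂μ ≤ ∫ _x, supA M A ∂μ := by
    apply integral_mono hint (integrable_const _)
    intro x
    exact le_csSup hbdd ⟨x, rfl⟩
  simpa using h1

lemma betaSet_bdd (M : ℕ → ℕ → Bool) (A : ShiftSpace M → ℝ)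
    (hbdd : BddAbove (Set.range A)) :
    BddAbove {r | ∃ μ : Measure (ShiftSpace M), InvProb M μ ∧ Integrable A μ ∧ ∫ x, A x ∂μ = r} :=
  ⟨supA M A, fun r hr => betaSet_le_supA M A hbdd r hr⟩

lemma iterate_mod (M : ℕ → ℕ → Bool) {n : ℕ} {z : ShiftSpace M}
    (hz : (shiftMap M)^[n] z = z) (i : ℕ) :
    (shiftMap M)^[i] z = (shiftMap M)^[i % n] z := by
  conv_lhs => rw [← Nat.mod_add_div i n]
  rw [Function.iterate_add_apply, Function.iterate_mul, Function.iterate_fixed hz]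

lemma map_sum_dirac {α β : Type*} [MeasurableSpace α] [MeasurableSpace β] {f : α → β}
    (hf : Measurable f) (s : Finset ℕ) (a : ℕ → α) :
    (∑ i ∈ s, Measure.dirac (a i)).map f = ∑ i ∈ s, Measure.dirac (f (a i)) := by
  classical
  induction s using Finset.induction with
  | empty => simp [Measure.map_zero]
  | insert _ _ h ih =>
    rw [Finset.sum_insert h, Finset.sum_insert h, Measure.map_add _ _ hf, ih,
      Measure.map_dirac' hf]

lemma periodic_mem_betaSet (M : ℕ → ℕ → Bool) (A : ShiftSpace M → ℝ)
    {n : ℕ} (hn : 1 ≤ n) {z : ShiftSpace M} (hz : (shiftMap M)^[n] z = z) :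
    ((n : ℝ)⁻¹ * birkhoff M A n z) ∈
      {r | ∃ μ : Measure (ShiftSpace M), InvProb M μ ∧ Integrable A μ ∧ ∫ x, A x ∂μ = r} := by
  classical
  set σm := shiftMap M with hσm
  set μ : Measure (ShiftSpace M) :=
    ((n : ℝ≥0∞)⁻¹) • ∑ i ∈ Finset.range n, Measure.dirac (σm^[i] z) with hμ
  have hn0 : (n : ℝ≥0∞) ≠ 0 := by
    simp only [ne_eq, Nat.cast_eq_zero]
    omega
  have hnt : (n : ℝ≥0∞) ≠ ⊤ := ENNReal.natCast_ne_top n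
  have hprob : IsProbabilityMeasure μ := by
    constructor
    rw [hμ]
    simp only [Measure.smul_apply, Measure.coe_finset_sum, Finset.sum_apply,
      Measure.dirac_apply_of_mem (Set.mem_univ _), Finset.sum_const, Finset.card_range,
      nsmul_eq_mul, mul_one, smul_eq_mul]
    exact ENNReal.inv_mul_cancel hn0 hnt
  -- invariance
  have hresum : ∀ g : ℕ → Measure (ShiftSpace M), g n = g 0 →
      ∑ i ∈ Finset.range n, g ((i+1) % n) = ∑ i ∈ Finset.range n, g i := by
    intro g hg
    obtain ⟨m, rfl⟩ : ∃ m, n = m + 1 := ⟨n - 1, by omega⟩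
    rw [Finset.sum_range_succ]
    have h1 : ∀ i ∈ Finset.range m, g ((i+1) % (m+1)) = g (i+1) := by
      intro i hi
      rw [Finset.mem_range] at hi
      rw [Nat.mod_eq_of_lt (by omega)]
    have h2 : ∑ i ∈ Finset.range m, g ((i+1) % (m+1)) = ∑ i ∈ Finset.range m, g (i+1) :=
      Finset.sum_congr rfl h1
    rw [h2, Nat.mod_self]
    exact (Finset.sum_range_succ' g m).symm
  have hinv : μ.map σm = μ := by
    rw [hμ, Measure.map_smul, map_sum_dirac (shift_meas M)]
    congr 1
    have h2 : ∀ i, σm (σm^[i] z) = σm^[(i+1) % n] z := by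
      intro i
      have h3 := Function.iterate_succ_apply' σm i z
      rw [← h3, iterate_mod M hz]
    calc ∑ i ∈ Finset.range n, Measure.dirac (σm (σm^[i] z))
        = ∑ i ∈ Finset.range n, (fun i => Measure.dirac (σm^[i] z)) ((i+1) % n) := by
          refine Finset.sum_congr rfl fun i _ => by rw [h2]
      _ = ∑ i ∈ Finset.range n, Measure.dirac (σm^[i] z) := by
          exact hresum (fun i => Measure.dirac (σm^[i] z)) (by simp [hz])
  -- integrability
  have hidirac : ∀ a : ShiftSpace M, Integrable A (Measure.dirac a) := by
    intro a
    exact (integrable_const (A a)).congr (ae_eq_dirac A).symm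
  have hint : Integrable A μ := by
    rw [hμ]
    refine Integrable.smul_measure ?_ (ENNReal.inv_ne_top.2 hn0)
    exact integrable_finset_sum_measure.2 fun i _ => hidirac _
  -- integral value
  have hval : ∫ x, A x ∂μ = (n : ℝ)⁻¹ * birkhoff M A n z := by
    rw [hμ, integral_smul_measure, integral_finset_sum_measure (fun i _ => hidirac _)]
    have : ∀ i, ∫ x, A x ∂(Measure.dirac (σm^[i] z)) = A (σm^[i] z) := fun i =>
      integral_dirac A _
    simp only [this]
    rw [birkhoff]
    rw [ENNReal.toReal_inv, ENNReal.toReal_natCast, smul_eq_mul]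
  exact ⟨μ, ⟨hprob, hinv⟩, hint, hval⟩

section Var
variable (M : ℕ → ℕ → Bool) (lam H : ℝ) (A : ShiftSpace M → ℝ)

lemma varKSet_bdd (hhold : LocHolder M lam H A) {k : ℕ} (hk : 1 ≤ k) :
    BddAbove {r | ∃ x y : ShiftSpace M, Agree M k x y ∧ A x - A y = r} := by
  refine ⟨H * lam ^ k, ?_⟩
  rintro r ⟨x, y, hxy, rfl⟩
  exact hhold k hk x y hxy

lemma varK_le (hlam₀ : 0 < lam) (hH : 0 < H) (hhold : LocHolder M lam H A)
    {k : ℕ} (hk : 1 ≤ k) : VarK M A k ≤ H * lam ^ k := by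
  apply Real.sSup_le
  · rintro r ⟨x, y, hxy, rfl⟩
    exact hhold k hk x y hxy
  · positivity

lemma varK_nonneg (hhold : LocHolder M lam H A) (x : ShiftSpace M) {k : ℕ} (hk : 1 ≤ k) :
    0 ≤ VarK M A k :=
  le_csSup (varKSet_bdd M lam H A hhold hk) ⟨x, x, fun _ _ => rfl, sub_self _⟩

lemma summable_varK (hlam₀ : 0 < lam) (hlam₁ : lam < 1) (hH : 0 < H)
    (hhold : LocHolder M lam H A) (x : ShiftSpace M) :
    Summable (fun m : ℕ => VarK M A (m + 1)) := by
  have hg : Summable (fun m : ℕ => (H * lam) * lam ^ m) :=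
    (summable_geometric_of_lt_one hlam₀.le hlam₁).mul_left _
  refine Summable.of_nonneg_of_le (fun m => varK_nonneg M lam H A hhold x (by omega))
    (fun m => ?_) hg
  have := varK_le M lam H A hlam₀ hH hhold (k := m + 1) (by omega)
  calc VarK M A (m+1) ≤ H * lam ^ (m+1) := this
    _ = H * lam * lam ^ m := by ring

lemma sum_varK_le (hlam₀ : 0 < lam) (hlam₁ : lam < 1) (hH : 0 < H)
    (hhold : LocHolder M lam H A) (x : ShiftSpace M) (k : ℕ) :
    ∑ m ∈ Finset.range k, VarK M A (m + 1) ≤ VarSum M A :=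
  Summable.sum_le_tsum (Finset.range k) (fun m _ => varK_nonneg M lam H A hhold x (by omega))
    (summable_varK M lam H A hlam₀ hlam₁ hH hhold x)

end Var

section Loop
variable (M : ℕ → ℕ → Bool) (F : Set ℕ) (K₀ : ℕ)

/-- From any point of the shift space, primitivity yields a periodic point whose
symbols at positions `1,…,K₀` (mod `K₀+1`) lie in `F`. -/
lemma exists_loop (hprim : Primitive M F K₀) (x : ShiftSpace M) :
    ∃ z : ShiftSpace M, (shiftMap M)^[K₀ + 1] z = z ∧
      (1 ≤ K₀ → (shiftMap M) z ∈ FCyl M F) := by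
  obtain ⟨p, hp0, hpK, hpF, hptrans⟩ :=
    hprim (x.1 0) (symbol_mem_BInf M x 0) (x.1 0) (symbol_mem_BInf M x 0)
  set n := K₀ + 1 with hn
  have hw : ∀ j, M (p (j % n)) (p ((j+1) % n)) = true := by
    intro j
    have ht : j % n < n := Nat.mod_lt _ (by omega)
    rw [mod_succ_eq n j (by omega)]
    by_cases h : j % n + 1 = n
    · rw [if_pos h]
      have h1 : j % n = K₀ := by omega
      have h2 : p 0 = p (K₀ + 1) := by rw [hp0, hpK]
      rw [h1, h2]
      exact hptrans K₀ le_rfl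
    · rw [if_neg h]
      exact hptrans (j % n) (by omega)
  refine ⟨perPoint M n p hw, perPoint_periodic M n p hw, fun hK => ?_⟩
  show (shiftMap M (perPoint M n p hw)).1 0 ∈ F
  show p ((0 + 1) % n) ∈ F
  have : (0 + 1) % n = 1 := Nat.mod_eq_of_lt (by omega)
  rw [this]
  exact hpF 1 le_rfl hK

lemma betaA_le_supA (hprim : Primitive M F K₀) (A : ShiftSpace M → ℝ)
    (hbdd : BddAbove (Set.range A)) (x : ShiftSpace M) :
    betaA M A ≤ supA M A := by
  obtain ⟨z, hz, -⟩ := exists_loop M F K₀ hprim x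
  exact csSup_le ⟨_, periodic_mem_betaSet M A (by omega) hz⟩
    (betaSet_le_supA M A hbdd)

lemma infF_le_supA (hprim : Primitive M F K₀) (hK : 1 ≤ K₀) (A : ShiftSpace M → ℝ)
    (hbdd : BddAbove (Set.range A)) (hbelow : BddBelow (A '' FCyl M F))
    (x : ShiftSpace M) : infF M F A ≤ supA M A := by
  obtain ⟨z, hz, hF⟩ := exists_loop M F K₀ hprim x
  have h1 : infF M F A ≤ A (shiftMap M z) := csInf_le hbelow ⟨_, hF hK, rfl⟩
  exact h1.trans (le_csSup hbdd ⟨_, rfl⟩)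

end Loop

lemma key_bound (M : ℕ → ℕ → Bool) (F : Set ℕ) (K₀ : ℕ) (lam H : ℝ)
    (hlam₀ : 0 < lam) (hlam₁ : lam < 1) (hH : 0 < H)
    (hprim : Primitive M F K₀) (A : ShiftSpace M → ℝ)
    (hbdd : BddAbove (Set.range A)) (hbelow : BddBelow (A '' FCyl M F))
    (hhold : LocHolder M lam H A)
    (x y : ShiftSpace M) (k : ℕ) (hk : 1 ≤ k) (hyx : (shiftMap M)^[k] y = x) :
    birkhoff M A k y - k * betaA M A ≤
      VarSum M A + (K₀ : ℝ) * (supA M A - infF M F A) := by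
  obtain ⟨p, hp0, hpK, hpF, hptrans⟩ :=
    hprim (y.1 (k-1)) (symbol_mem_BInf M y (k-1)) (y.1 0) (symbol_mem_BInf M y 0)
  set n := k + K₀ with hn
  set w : ℕ → ℕ := fun t => if t < k then y.1 t else p (t - (k-1)) with hwdef
  have hwlt : ∀ t, t < k → w t = y.1 t := fun t ht => if_pos ht
  have hwge : ∀ t, k - 1 ≤ t → w t = p (t - (k-1)) := by
    intro t ht
    by_cases h : t < k
    · have h1 : t = k - 1 := by omega
      subst h1
      show (if k - 1 < k then y.1 (k-1) else p (k-1-(k-1))) = p (k-1-(k-1))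
      rw [if_pos h, Nat.sub_self, hp0]
    · exact if_neg h
  have hw : ∀ j, M (w (j % n)) (w ((j+1) % n)) = true := by
    intro j
    have ht : j % n < n := Nat.mod_lt _ (by omega)
    rw [mod_succ_eq n j (by omega)]
    by_cases h : j % n + 1 = n
    · rw [if_pos h]
      rw [hwge (j % n) (by omega), hwlt 0 (by omega)]
      have e1 : j % n - (k-1) = K₀ := by omega
      rw [e1, ← hpK]
      exact hptrans K₀ le_rfl
    · rw [if_neg h]
      by_cases h2 : j % n + 1 < k
      · rw [hwlt (j % n) (by omega), hwlt (j % n + 1) h2]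
        exact y.2 (j % n)
      · rw [hwge (j % n) (by omega), hwge (j % n + 1) (by omega)]
        have e2 : (j % n + 1) - (k-1) = (j % n - (k-1)) + 1 := by omega
        rw [e2]
        exact hptrans (j % n - (k-1)) (by omega)
  set z := perPoint M n w hw with hzdef
  have hper : (shiftMap M)^[n] z = z := perPoint_periodic M n w hw
  have hz1 : ∀ t, z.1 t = w (t % n) := fun t => rfl
  -- z agrees with y on the first k coordinates
  have hagree : ∀ j, j < k → y.1 j = z.1 j := by
    intro j hj
    rw [hz1, Nat.mod_eq_of_lt (by omega), hwlt j hj]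
  -- (4) Birkhoff sums of y and z along the first k steps differ by at most VarSum
  have h4 : birkhoff M A k y - birkhoff M A k z ≤
      ∑ j ∈ Finset.range k, VarK M A (k - j) := by
    rw [birkhoff, birkhoff, ← Finset.sum_sub_distrib]
    apply Finset.sum_le_sum
    intro j hj
    rw [Finset.mem_range] at hj
    have hag : Agree M (k - j) ((shiftMap M)^[j] y) ((shiftMap M)^[j] z) := by
      intro m hm
      rw [iter_apply, iter_apply]
      exact hagree (m + j) (by omega)
    exact le_csSup (varKSet_bdd M lam H A hhold (by omega))
      ⟨(shiftMap M)^[j] y, (shiftMap M)^[j] z, hag, rfl⟩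
  have h5 : ∑ j ∈ Finset.range k, VarK M A (k - j) =
      ∑ m ∈ Finset.range k, VarK M A (m + 1) := by
    rw [← Finset.sum_range_reflect (fun m => VarK M A (m + 1)) k]
    apply Finset.sum_congr rfl
    intro j hj
    rw [Finset.mem_range] at hj
    congr 1
    omega
  have hV : ∑ m ∈ Finset.range k, VarK M A (m + 1) ≤ VarSum M A :=
    sum_varK_le M lam H A hlam₀ hlam₁ hH hhold y k
  -- (1) split the Birkhoff sum of z over a full period
  have hsplit : birkhoff M A n z = birkhoff M A k z +
      ∑ s ∈ Finset.range K₀, A ((shiftMap M)^[k + s] z) := by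
    rw [birkhoff, birkhoff, hn, Finset.sum_range_add]
  -- (2) each of the extra terms is at least infF
  have hterm : ∀ s ∈ Finset.range K₀, infF M F A ≤ A ((shiftMap M)^[k + s] z) := by
    intro s hs
    rw [Finset.mem_range] at hs
    have hmem : (shiftMap M)^[k + s] z ∈ FCyl M F := by
      show ((shiftMap M)^[k + s] z).1 0 ∈ F
      rw [iter_apply]
      show w ((0 + (k + s)) % n) ∈ F
      have e3 : (0 + (k + s)) % n = k + s := by
        rw [Nat.zero_add]
        exact Nat.mod_eq_of_lt (by omega)
      rw [e3, hwge (k + s) (by omega)]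
      have e4 : k + s - (k - 1) = s + 1 := by omega
      rw [e4]
      exact hpF (s + 1) (by omega) (by omega)
    exact csInf_le hbelow ⟨_, hmem, rfl⟩
  have hsum : (K₀ : ℝ) * infF M F A ≤ ∑ s ∈ Finset.range K₀, A ((shiftMap M)^[k + s] z) := by
    calc (K₀ : ℝ) * infF M F A = ∑ _s ∈ Finset.range K₀, infF M F A := by
          rw [Finset.sum_const, Finset.card_range, nsmul_eq_mul]
      _ ≤ _ := Finset.sum_le_sum hterm
  -- (3) periodic orbit bound
  have hperle : birkhoff M A n z ≤ (n : ℝ) * betaA M A := by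
    have hmem := periodic_mem_betaSet M A (n := n) (by omega) hper
    have hle : (n : ℝ)⁻¹ * birkhoff M A n z ≤ betaA M A :=
      le_csSup (betaSet_bdd M A hbdd) hmem
    have hnpos : (0:ℝ) < (n : ℝ) := by
      have : 0 < n := by omega
      exact_mod_cast this
    have h6 := mul_le_mul_of_nonneg_left hle hnpos.le
    rwa [← mul_assoc, mul_inv_cancel₀ hnpos.ne', one_mul] at h6
  have hβ : betaA M A ≤ supA M A := betaA_le_supA M F K₀ hprim A hbdd y
  have hKβ : (K₀ : ℝ) * betaA M A ≤ (K₀ : ℝ) * supA M A :=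
    mul_le_mul_of_nonneg_left hβ (by positivity)
  have hncast : ((n : ℕ) : ℝ) = (k : ℝ) + (K₀ : ℝ) := by
    rw [hn]; push_cast; ring
  rw [hncast] at hperle
  linarith [h4, h5.le, hV, hsplit.le, hsum, hperle, hKβ]


/-- the function `u_A(x) = sup {S_k(A - β_A)(y) : k ≥ 0, σ^k(y) = x}` is
well defined (the defining set is nonempty and bounded above), satisfies
`0 ≤ u_A ≤ max{Var(A) + K₀(sup A - inf A|_F), K₀(sup A - β_A)}`, and is a sub-action. -/
theorem uA_well_defined_bounded_subaction
    (M : ℕ → ℕ → Bool) (F : Set ℕ) (K₀ : ℕ) (lam H : ℝ)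
    (hlam₀ : 0 < lam) (hlam₁ : lam < 1) (hH : 0 < H)
    (hprim : Primitive M F K₀)
    (A : ShiftSpace M → ℝ)
    (hbdd : BddAbove (Set.range A))
    (hbelow : BddBelow (A '' FCyl M F))
    (hhold : LocHolder M lam H A) :
    (∀ x : ShiftSpace M, (uASet M A x).Nonempty ∧ BddAbove (uASet M A x)) ∧
    (∀ x : ShiftSpace M, 0 ≤ uA M A x ∧
      uA M A x ≤ max (VarSum M A + (K₀ : ℝ) * (supA M A - infF M F A))
        ((K₀ : ℝ) * (supA M A - betaA M A))) ∧
    (∀ x : ShiftSpace M, A x + uA M A x - uA M A (shiftMap M x) ≤ betaA M A) := by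
  have hB1 : ∀ _x0 : ShiftSpace M,
      0 ≤ VarSum M A + (K₀ : ℝ) * (supA M A - infF M F A) := by
    intro x0
    have hVS : 0 ≤ VarSum M A :=
      tsum_nonneg (fun m => varK_nonneg M lam H A hhold x0 (by omega))
    rcases Nat.eq_zero_or_pos K₀ with hK | hK
    · simp [hK, hVS]
    · have h1 := infF_le_supA M F K₀ hprim hK A hbdd hbelow x0
      have h2 : 0 ≤ (K₀ : ℝ) * (supA M A - infF M F A) :=
        mul_nonneg (by positivity) (by linarith)
      linarith
  have hmem0 : ∀ x : ShiftSpace M, (0:ℝ) ∈ uASet M A x :=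
    fun x => ⟨0, x, rfl, by simp [birkhoff]⟩
  have hub : ∀ x : ShiftSpace M, ∀ r ∈ uASet M A x,
      r ≤ VarSum M A + (K₀ : ℝ) * (supA M A - infF M F A) := by
    rintro x r ⟨k, y, hyx, rfl⟩
    rcases Nat.eq_zero_or_pos k with hk | hk
    · subst hk
      simpa [birkhoff] using hB1 x
    · exact key_bound M F K₀ lam H hlam₀ hlam₁ hH hprim A hbdd hbelow hhold x y k hk hyx
  have hbddu : ∀ x : ShiftSpace M, BddAbove (uASet M A x) := fun x => ⟨_, hub x⟩
  refine ⟨fun x => ⟨⟨0, hmem0 x⟩, hbddu x⟩, fun x => ⟨?_, ?_⟩, ?_⟩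
  · exact le_csSup (hbddu x) (hmem0 x)
  · exact csSup_le ⟨0, hmem0 x⟩ (fun r hr => (hub x r hr).trans (le_max_left _ _))
  · intro x
    have key : uA M A x ≤ betaA M A - A x + uA M A (shiftMap M x) := by
      apply csSup_le ⟨0, hmem0 x⟩
      rintro r ⟨k, y, hyx, rfl⟩
      have hmem' : birkhoff M A (k+1) y - ((k+1 : ℕ) : ℝ) * betaA M A
          ∈ uASet M A (shiftMap M x) :=
        ⟨k+1, y, by rw [Function.iterate_succ_apply', hyx], rfl⟩
      have hle' := le_csSup (hbddu (shiftMap M x)) hmem'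
      have heq : birkhoff M A (k+1) y = birkhoff M A k y + A x := by
        rw [birkhoff, Finset.sum_range_succ, hyx]
        rfl
      push_cast at hle'
      rw [heq] at hle'
      have hle'' : birkhoff M A k y + A x - ((k : ℝ) + 1) * betaA M A ≤
          uA M A (shiftMap M x) := hle'
      show birkhoff M A k y - (k : ℝ) * betaA M A ≤ _
      linarith [hle'']
    linarith [key]
end

section
/- Let (Σ,σ) be a primitive Markov subshift on a countable alphabet and let A : Σ → ℝ be a bounded above, locally Hölder continuous potential (with constant H_A) satisfying inf A|_{⋃_{i∈F}[i]} > −∞. Then the function u_A(x) = sup{S_k(A − β_A)(y) : k ≥ 0, y ∈ Σ, σ^k(y) = x} is locally Hölder continuous with Var_k(u_A) ≤ (H_A/(1−λ)) λ^k for all k ≥ 1. -/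
open MeasureTheory Filter Topology Set

lemma shift_iter_apply (M : ℕ → ℕ → Bool) (m : ℕ) (w : ShiftSpace M) (j : ℕ) :
    ((shiftMap M)^[m] w).1 j = w.1 (j + m) := by
  induction m generalizing w j with
  | zero => rfl
  | succ m ih =>
    rw [Function.iterate_succ_apply, ih (shiftMap M w) j]
    rfl

lemma zero_mem_uASet (M : ℕ → ℕ → Bool) (A : ShiftSpace M → ℝ) (x : ShiftSpace M) :
    (0 : ℝ) ∈ uASet M A x := by
  refine ⟨0, x, rfl, by simp [birkhoff]⟩

/-- Key transfer lemma: if `x` and `y` agree on the first `k ≥ 1` coordinates, every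
value in `uASet x` is bounded by a value in `uASet y` plus `H/(1-λ)·λ^k`. -/
lemma uASet_transfer (M : ℕ → ℕ → Bool) (lam H : ℝ)
    (hlam₀ : 0 < lam) (hlam₁ : lam < 1) (hH : 0 < H)
    (A : ShiftSpace M → ℝ) (hhold : LocHolder M lam H A)
    (k : ℕ) (hk : 1 ≤ k) (x y : ShiftSpace M) (hxy : Agree M k x y) :
    ∀ r ∈ uASet M A x, ∃ r' ∈ uASet M A y, r ≤ r' + H / (1 - lam) * lam ^ k := by
  rintro r ⟨m, y', hy', rfl⟩
  -- define z: first m symbols of y', then y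
  have hz : InShift M (fun j => if j < m then y'.1 j else y.1 (j - m)) := by
    intro j
    by_cases h1 : j + 1 < m
    · simp only [h1, Nat.lt_of_succ_lt h1, if_pos]
      exact y'.2 j
    · by_cases h2 : j < m
      · -- j = m - 1, need M (y' j) (y 0)
        have hjm : j + 1 = m := by omega
        simp only [h2, if_pos, if_neg h1, hjm]
        rw [if_neg (lt_irrefl m), Nat.sub_self]
        have hx0 : y'.1 m = x.1 0 := by
          have := congrArg (fun w : ShiftSpace M => w.1 0) hy'
          simpa [shift_iter_apply] using this
        have hy0 : x.1 0 = y.1 0 := hxy 0 hk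
        have := y'.2 j
        rwa [hjm, hx0, hy0] at this
      · simp only [if_neg h1, if_neg h2]
        have h3 : j + 1 - m = (j - m) + 1 := by omega
        rw [h3]
        exact y.2 (j - m)
  set z : ShiftSpace M := ⟨fun j => if j < m then y'.1 j else y.1 (j - m), hz⟩ with hzdef
  have hσz : (shiftMap M)^[m] z = y := by
    apply Subtype.ext
    funext j
    rw [shift_iter_apply]
    show (if j + m < m then y'.1 (j + m) else y.1 (j + m - m)) = y.1 j
    simp
  refine ⟨birkhoff M A m z - m * betaA M A, ⟨m, z, hσz, rfl⟩, ?_⟩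
  have hcoord : ∀ j < m, A ((shiftMap M)^[j] y') - A ((shiftMap M)^[j] z)
      ≤ H * lam ^ (m - j + k) := by
    intro j hj
    apply hhold (m - j + k) (by omega)
    intro t ht
    rw [shift_iter_apply, shift_iter_apply]
    show y'.1 (t + j) = if t + j < m then y'.1 (t + j) else y.1 (t + j - m)
    by_cases h : t + j < m
    · rw [if_pos h]
    · rw [if_neg h]
      have h4 : t + j - m < k := by omega
      have hxc : y'.1 (t + j) = x.1 (t + j - m) := by
        have h5 : t + j = (t + j - m) + m := by omega
        conv_lhs => rw [h5]
        rw [← shift_iter_apply M m y', hy']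
      rw [hxc]
      exact hxy _ h4
  have hsum : birkhoff M A m y' - birkhoff M A m z
      ≤ ∑ j ∈ Finset.range m, H * lam ^ (m - j + k) := by
    unfold birkhoff
    rw [← Finset.sum_sub_distrib]
    exact Finset.sum_le_sum fun j hj => hcoord j (Finset.mem_range.mp hj)
  have hgeom : ∑ j ∈ Finset.range m, H * lam ^ (m - j + k)
      ≤ H / (1 - lam) * lam ^ k := by
    have hrefl : ∑ j ∈ Finset.range m, H * lam ^ (m - j + k)
        = ∑ j ∈ Finset.range m, H * lam ^ (j + 1 + k) := by
      rw [← Finset.sum_range_reflect]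
      apply Finset.sum_congr rfl
      intro j hj
      have hj' := Finset.mem_range.mp hj
      congr 2
      omega
    rw [hrefl]
    have h1lam : 0 < 1 - lam := by linarith
    have hsum2 : ∑ j ∈ Finset.range m, H * lam ^ (j + 1 + k)
        = H * lam ^ (k + 1) * ∑ j ∈ Finset.range m, lam ^ j := by
      rw [Finset.mul_sum]
      apply Finset.sum_congr rfl
      intro j _
      rw [pow_add, pow_add, pow_one]
      ring
    rw [hsum2]
    have hg : ∑ j ∈ Finset.range m, lam ^ j ≤ 1 / (1 - lam) := by
      rw [geom_sum_eq (ne_of_lt hlam₁) m]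
      have hpow : 0 ≤ lam ^ m := le_of_lt (pow_pos hlam₀ m)
      have heq : (lam ^ m - 1) / (lam - 1) = (1 - lam ^ m) / (1 - lam) := by
        rw [← neg_div_neg_eq]; ring_nf
      rw [heq]
      exact div_le_div₀ zero_le_one (by linarith) h1lam le_rfl
    have hpos : 0 < H * lam ^ (k + 1) := mul_pos hH (pow_pos hlam₀ _)
    calc H * lam ^ (k + 1) * ∑ j ∈ Finset.range m, lam ^ j
        ≤ H * lam ^ (k + 1) * (1 / (1 - lam)) := by
          exact mul_le_mul_of_nonneg_left hg (le_of_lt hpos)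
      _ ≤ H / (1 - lam) * lam ^ k := by
          have hpk : 0 < lam ^ k := pow_pos hlam₀ k
          rw [pow_succ, mul_one_div, div_mul_eq_mul_div, div_le_div_iff₀ h1lam h1lam]
          nlinarith [mul_pos (mul_pos hH hpk) h1lam]
  linarith [hsum, hgeom]

/-- the function `u_A(x) = sup {S_k(A - β_A)(y) : k ≥ 0, σ^k(y) = x}` is
locally Hölder continuous with `Var_k(u_A) ≤ (H_A/(1-λ)) λ^k` for all `k ≥ 1`. -/
theorem uA_locally_holder
    (M : ℕ → ℕ → Bool) (F : Set ℕ) (K₀ : ℕ) (lam H : ℝ)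
    (hlam₀ : 0 < lam) (hlam₁ : lam < 1) (hH : 0 < H)
    (hprim : Primitive M F K₀)
    (A : ShiftSpace M → ℝ)
    (hbdd : BddAbove (Set.range A))
    (hbelow : BddBelow (A '' FCyl M F))
    (hhold : LocHolder M lam H A) :
    LocHolder M lam (H / (1 - lam)) (uA M A) := by
  intro k hk x y hxy
  unfold uA
  have h1lam : 0 < 1 - lam := by linarith
  have hc : 0 ≤ H / (1 - lam) * lam ^ k :=
    mul_nonneg (le_of_lt (div_pos hH h1lam)) (le_of_lt (pow_pos hlam₀ k))
  have hxy' : Agree M k y x := fun j hj => (hxy j hj).symm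
  have key := uASet_transfer M lam H hlam₀ hlam₁ hH A hhold k hk x y hxy
  have key' := uASet_transfer M lam H hlam₀ hlam₁ hH A hhold k hk y x hxy'
  by_cases hbY : BddAbove (uASet M A y)
  · have hle : sSup (uASet M A x) ≤ sSup (uASet M A y) + H / (1 - lam) * lam ^ k := by
      apply csSup_le ⟨0, zero_mem_uASet M A x⟩
      intro r hr
      obtain ⟨r', hr', hle⟩ := key r hr
      have := le_csSup hbY hr'
      linarith
    linarith
  · have hbX : ¬ BddAbove (uASet M A x) := by
      intro ⟨b, hb⟩
      apply hbY
      refine ⟨b + H / (1 - lam) * lam ^ k, fun r' hr' => ?_⟩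
      obtain ⟨r'', hr'', hle⟩ := key' r' hr'
      have := hb hr''
      linarith
    rw [Real.sSup_of_not_bddAbove hbX, Real.sSup_of_not_bddAbove hbY]
    simpa using hc
end
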